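/- The coalition number of the Petersen graph is at most 6. In particular, there is no coalition partition of the Petersen graph with 7 or more classes. -/
import Mathlib

set_option maxRecDepth 100000


open Finset

/-- `S` is a dominating set of `G`: every vertex outside `S` has a neighbor in `S`. -/
def Dominates {V : Type*} (G : SimpleGraph V) (S : Finset V) : Prop :=
  ∀ v ∉ S, ∃ u ∈ S, G.Adj u v

/-- Two disjoint non-dominating sets whose union dominates form a coalition. -/
def FormsCoalition {V : Type*} [DecidableEq V] (G : SimpleGraph V) (X Y : Finset V) : Prop :=
  ¬ Dominates G X ∧ ¬ Dominates G Y ∧ Dominates G (X ∪ Y)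

/-- A coalition partition: every class is a singleton dominating set, or is a
non-dominating set forming a coalition with another class. -/
def IsCoalitionPartition {V : Type*} [Fintype V] [DecidableEq V] (G : SimpleGraph V)
    (π : Finpartition (univ : Finset V)) : Prop :=
  ∀ X ∈ π.parts, (X.card = 1 ∧ Dominates G X) ∨
    (¬ Dominates G X ∧ ∃ Y ∈ π.parts, Y ≠ X ∧ ¬ Dominates G Y ∧ Dominates G (X ∪ Y))

/-- The coalition number: the maximum order of a coalition partition. -/
noncomputable def coalitionNumber (V : Type*) [Fintype V] [DecidableEq V]
    (G : SimpleGraph V) : ℕ :=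
  sSup {k | ∃ π : Finpartition (univ : Finset V), IsCoalitionPartition G π ∧ π.parts.card = k}

def petersenK : SimpleGraph {s : Finset (Fin 5) // s.card = 2} :=
  SimpleGraph.fromRel (fun a b => Disjoint a.1 b.1)


abbrev PV := {s : Finset (Fin 5) // s.card = 2}

instance : DecidableRel petersenK.Adj := fun a b => by
  unfold petersenK; rw [SimpleGraph.fromRel_adj]; infer_instance
def vlist : List PV :=
  [⟨{0,1}, rfl⟩, ⟨{0,2}, rfl⟩, ⟨{0,3}, rfl⟩, ⟨{0,4}, rfl⟩, ⟨{1,2}, rfl⟩,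
   ⟨{1,3}, rfl⟩, ⟨{1,4}, rfl⟩, ⟨{2,3}, rfl⟩, ⟨{2,4}, rfl⟩, ⟨{3,4}, rfl⟩]
def w (v : PV) : Nat := 2 ^ (vlist.idxOf v)
def nbMask (v : PV) : Nat :=
  (vlist.filter (fun u => decide (u = v) || decide (petersenK.Adj u v))).foldr (fun u a => w u ||| a) 0
def NsL : List Nat := [897, 610, 340, 184, 540, 298, 198, 201, 293, 531]
def domB (m : Nat) : Bool := NsL.all (fun nm => nm &&& m != 0)
instance : Std.Commutative (α := Nat) (·|||·) := ⟨Nat.lor_comm⟩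
instance : Std.Associative (α := Nat) (·|||·) := ⟨Nat.lor_assoc⟩
def maskV (S : Finset PV) : Nat := S.fold (·|||·) 0 w

theorem NsL_eq : NsL = vlist.map nbMask := by decide
theorem vlist_complete : ∀ v : PV, v ∈ vlist := by decide
theorem w_nb_adj : ∀ u v : PV, (w u &&& nbMask v ≠ 0) ↔ (u = v ∨ petersenK.Adj u v) := by decide
theorem wland : ∀ u v : PV, (w u &&& w v ≠ 0) ↔ u = v := by decide

theorem lor_eq_zero {x y : Nat} (h : x ||| y = 0) : x = 0 ∧ y = 0 := by
  have hb : ∀ i, x.testBit i = false ∧ y.testBit i = false := by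
    intro i
    have hi := congrArg (fun n => Nat.testBit n i) h
    simp only [Nat.testBit_or, Nat.zero_testBit] at hi
    exact ⟨(Bool.or_eq_false_iff.mp hi).1, (Bool.or_eq_false_iff.mp hi).2⟩
  exact ⟨Nat.zero_of_testBit_eq_false fun i => (hb i).1,
         Nat.zero_of_testBit_eq_false fun i => (hb i).2⟩

theorem lor_ne_zero {x y : Nat} : x ||| y ≠ 0 ↔ x ≠ 0 ∨ y ≠ 0 := by
  constructor
  · intro h
    by_contra hc
    push_neg at hc
    rw [hc.1, hc.2] at h; exact h rfl
  · rintro (h | h) h0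
    · exact h (lor_eq_zero h0).1
    · exact h (lor_eq_zero h0).2

theorem GEN (m : Nat) (S : Finset PV) : m &&& maskV S ≠ 0 ↔ ∃ u ∈ S, m &&& w u ≠ 0 := by
  induction S using Finset.induction_on with
  | empty => simp [maskV]
  | @insert a s ha ih =>
    rw [maskV, Finset.fold_insert ha]
    rw [Nat.and_or_distrib_left, lor_ne_zero]
    rw [maskV] at ih
    simp only [Finset.mem_insert, ih]
    constructor
    · rintro (h | ⟨u, hu, h⟩)
      · exact ⟨a, Or.inl rfl, h⟩
      · exact ⟨u, Or.inr hu, h⟩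
    · rintro ⟨u, (rfl | hu), h⟩
      · exact Or.inl h
      · exact Or.inr ⟨u, hu, h⟩

theorem mem_iff_mask {v : PV} {S : Finset PV} : v ∈ S ↔ w v &&& maskV S ≠ 0 := by
  rw [GEN]
  constructor
  · intro h; exact ⟨v, h, (wland v v).mpr rfl⟩
  · rintro ⟨u, hu, h⟩; rcases (wland v u).mp h with rfl; exact hu

theorem disj_mask {S T : Finset PV} (h : Disjoint S T) : maskV S &&& maskV T = 0 := by
  by_contra h0
  obtain ⟨u, hu, h1⟩ := (GEN _ _).mp h0
  have h2 : u ∈ S := mem_iff_mask.mpr (by rwa [Nat.and_comm] at h1)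
  exact Finset.disjoint_left.mp h h2 hu

theorem dom_reform (S : Finset PV) :
    Dominates petersenK S ↔ ∀ v : PV, ∃ u ∈ S, u = v ∨ petersenK.Adj u v := by
  constructor
  · intro h v
    by_cases hv : v ∈ S
    · exact ⟨v, hv, Or.inl rfl⟩
    · obtain ⟨u, hu, ha⟩ := h v hv; exact ⟨u, hu, Or.inr ha⟩
  · intro h v hv
    obtain ⟨u, hu, hd⟩ := h v
    rcases hd with rfl | ha
    · exact absurd hu hv
    · exact ⟨u, hu, ha⟩

theorem Dominates_iff (S : Finset PV) : Dominates petersenK S ↔ domB (maskV S) = true := by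
  rw [dom_reform]
  rw [show domB (maskV S) = true ↔ ∀ nm ∈ NsL, nm &&& maskV S ≠ 0 by
    simp [domB, List.all_eq_true]]
  rw [NsL_eq]
  simp only [List.forall_mem_map]
  constructor
  · intro h v _
    obtain ⟨u, hu, hd⟩ := h v
    rw [GEN]
    exact ⟨u, hu, by rw [Nat.and_comm]; exact (w_nb_adj u v).mpr hd⟩
  · intro h v
    obtain ⟨u, hu, hd⟩ := (GEN _ _).mp (h v (vlist_complete v))
    exact ⟨u, hu, (w_nb_adj u v).mp (by rwa [Nat.and_comm] at hd)⟩
def masksOfSize : Nat → Nat → List Nat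
  | 0, _ => [0]
  | _+1, 0 => []
  | k+1, n+1 => (masksOfSize (k+1) n) ++ (masksOfSize k n).map (fun m => 2^n ||| m)
def cand (k : Nat) : List Nat := (masksOfSize k 10).filter (fun m => !domB m)
def vMasks : List Nat := [1,2,4,8,16,32,64,128,256,512]
theorem vMasks_eq : vMasks = vlist.map w := by decide
theorem nd1 : ∀ m ∈ masksOfSize 1 10, domB m = false := by decide
theorem nd2 : ∀ m ∈ masksOfSize 2 10, domB m = false := by decide
theorem idx_lt : ∀ v : PV, vlist.idxOf v < 10 := by decide
theorem idx_inj : ∀ a b : PV, a ≠ b → vlist.idxOf a ≠ vlist.idxOf b := by decide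
theorem LIdx1 : ∀ i : Fin 10, (2^(i:ℕ) ||| 0) ∈ masksOfSize 1 10 := by decide
theorem LIdx2 : ∀ i j : Fin 10, i ≠ j → (2^(i:ℕ) ||| (2^(j:ℕ) ||| 0)) ∈ masksOfSize 2 10 := by decide
theorem LIdx3 : ∀ i j k : Fin 10, i ≠ j → i ≠ k → j ≠ k →
    (2^(i:ℕ) ||| (2^(j:ℕ) ||| (2^(k:ℕ) ||| 0))) ∈ masksOfSize 3 10 := by decide
theorem mask_singleton (a : PV) : maskV {a} = w a ||| 0 := Finset.fold_singleton
theorem mask_insert {a : PV} {s : Finset PV} (h : a ∉ s) :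
    maskV (insert a s) = w a ||| maskV s := Finset.fold_insert h

def covAll (bs : List Nat) : Bool :=
  vMasks.all (fun x => bs.any (fun b => b &&& x != 0) || bs.any (fun b => domB (b ||| x)))
theorem w_mem_vMasks : ∀ v : PV, w v ∈ vMasks := by decide
-- profile m=1, |B| ∈ {2,3}
theorem LM1 : ∀ b ∈ cand 2 ++ cand 3, ¬ (covAll [b] = true) := by decide
-- profile m=1, |B| = 4 : b = x ||| t, x a vertex mask, t nondominating triple
theorem LM1Q : ∀ t ∈ cand 3, ∀ x ∈ vMasks, t &&& x = 0 → domB (x ||| t) = false →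
    ¬ (covAll [x ||| t] = true) := by decide
theorem LM22 : ∀ b1 ∈ cand 2, ∀ b2 ∈ cand 2, b1 &&& b2 = 0 → ¬ (covAll [b1, b2] = true) := by decide
theorem LM23 : ∀ b1 ∈ cand 2, ∀ b2 ∈ cand 3, b1 &&& b2 = 0 → ¬ (covAll [b1, b2] = true) := by decide
set_option maxHeartbeats 4000000 in
theorem LM222 : ∀ b1 ∈ cand 2, ∀ b2 ∈ cand 2, b1 < b2 → b1 &&& b2 = 0 →
    ∀ b3 ∈ cand 2, b2 < b3 → b1 &&& b3 = 0 → b2 &&& b3 = 0 → ¬ (covAll [b1, b2, b3] = true) := by decide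

theorem dom_mono {S T : Finset PV} (hst : S ⊆ T) (h : Dominates petersenK S) :
    Dominates petersenK T := by
  intro v hv
  obtain ⟨u, hu, ha⟩ := h v (fun hvS => hv (hst hvS))
  exact ⟨u, hst hu, ha⟩

theorem finNe {a b : PV} (h : a ≠ b) :
    (⟨vlist.idxOf a, idx_lt a⟩ : Fin 10) ≠ ⟨vlist.idxOf b, idx_lt b⟩ := by
  simp only [ne_eq, Fin.mk.injEq]
  exact idx_inj a b h

theorem maskM1 {B : Finset PV} (h : B.card = 1) : maskV B ∈ masksOfSize 1 10 := by
  obtain ⟨a, rfl⟩ := Finset.card_eq_one.mp h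
  rw [mask_singleton]
  exact LIdx1 ⟨vlist.idxOf a, idx_lt a⟩

theorem maskM2 {B : Finset PV} (h : B.card = 2) : maskV B ∈ masksOfSize 2 10 := by
  obtain ⟨a, b, hab, rfl⟩ := Finset.card_eq_two.mp h
  rw [show ({a, b} : Finset PV) = insert a {b} from rfl,
    mask_insert (by simp [hab]), mask_singleton]
  exact LIdx2 _ _ (finNe hab)

theorem maskM3 {B : Finset PV} (h : B.card = 3) : maskV B ∈ masksOfSize 3 10 := by
  obtain ⟨a, b, c, hab, hac, hbc, rfl⟩ := Finset.card_eq_three.mp h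
  rw [show ({a, b, c} : Finset PV) = insert a (insert b {c}) from rfl,
    mask_insert (by simp [hab, hac]), mask_insert (by simp [hbc]), mask_singleton]
  exact LIdx3 _ _ _ (finNe hab) (finNe hac) (finNe hbc)

theorem domB_false_of_not_dom {B : Finset PV} (h : ¬ Dominates petersenK B) :
    domB (maskV B) = false := by
  cases hdb : domB (maskV B)
  · rfl
  · exact absurd ((Dominates_iff B).mpr hdb) h

theorem noDom1 {B : Finset PV} (h : B.card = 1) : ¬ Dominates petersenK B := by
  intro hd
  have h1 := nd1 _ (maskM1 h)
  rw [(Dominates_iff B).mp hd] at h1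
  cases h1

theorem noDom2 {B : Finset PV} (h : B.card = 2) : ¬ Dominates petersenK B := by
  intro hd
  have h1 := nd2 _ (maskM2 h)
  rw [(Dominates_iff B).mp hd] at h1
  cases h1

theorem mask_ne_zero {B : Finset PV} (h : B.Nonempty) : maskV B ≠ 0 := by
  obtain ⟨v, hv⟩ := h
  intro h0
  have := mem_iff_mask.mp hv
  rw [h0] at this
  exact this (Nat.and_zero _)

theorem land_zero_of_notMem {a : PV} {t : Finset PV} (h : a ∉ t) : maskV t &&& w a = 0 := by
  rw [Nat.and_comm]
  by_contra hne
  exact h (mem_iff_mask.mpr hne)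

theorem candMem {B : Finset PV} {k : Nat} (hms : maskV B ∈ masksOfSize k 10)
    (hnd : ¬ Dominates petersenK B) : maskV B ∈ cand k := by
  rw [cand, List.mem_filter]
  exact ⟨hms, by simp [domB_false_of_not_dom hnd]⟩

theorem covAll_build (Bs : List (Finset PV))
    (hcov : ∀ v : PV, (∃ B ∈ Bs, v ∈ B) ∨
      (∃ B ∈ Bs, v ∉ B ∧ Dominates petersenK (insert v B))) :
    covAll (Bs.map maskV) = true := by
  rw [covAll, List.all_eq_true]
  intro x hx
  rw [vMasks_eq] at hx
  obtain ⟨v, -, rfl⟩ := List.mem_map.mp hx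
  rcases hcov v with ⟨B, hB, hv⟩ | ⟨B, hB, hnv, hdom⟩
  · apply Bool.or_eq_true_iff.mpr
    left
    rw [List.any_eq_true]
    refine ⟨maskV B, List.mem_map.mpr ⟨B, hB, rfl⟩, ?_⟩
    have := mem_iff_mask.mp hv
    rw [Nat.and_comm] at this
    simpa using this
  · apply Bool.or_eq_true_iff.mpr
    right
    rw [List.any_eq_true]
    refine ⟨maskV B, List.mem_map.mpr ⟨B, hB, rfl⟩, ?_⟩
    have hm : maskV (insert v B) = w v ||| maskV B := mask_insert hnv
    have := (Dominates_iff _).mp hdom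
    rw [hm, Nat.lor_comm] at this
    simpa using this


theorem parts_le (π : Finpartition (Finset.univ : Finset PV))
    (h : IsCoalitionPartition petersenK π) : π.parts.card ≤ 6 := by
  by_contra h6
  push_neg at h6
  have hdisj : ∀ X ∈ π.parts, ∀ Y ∈ π.parts, X ≠ Y → Disjoint X Y := fun X hX Y hY hne =>
    π.disjoint (Finset.mem_coe.mpr hX) (Finset.mem_coe.mpr hY) hne
  have hne : ∀ X ∈ π.parts, X.Nonempty := fun X hX => π.nonempty_of_mem_parts hX
  have hco : ∀ X ∈ π.parts, ¬ Dominates petersenK X ∧ ∃ Y ∈ π.parts, Y ≠ X ∧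
      ¬ Dominates petersenK Y ∧ Dominates petersenK (X ∪ Y) := by
    intro X hX
    rcases h X hX with ⟨hc1, hd⟩ | hok
    · exact absurd hd (noDom1 hc1)
    · exact hok
  have hsum : ∑ X ∈ π.parts, X.card = 10 := by
    rw [π.sum_card_parts]; decide
  set Big := π.parts.filter (fun X => 2 ≤ X.card) with hBig
  have hBigMem : ∀ B ∈ Big, B ∈ π.parts ∧ 2 ≤ B.card := fun B hB => Finset.mem_filter.mp hB
  have cover : ∀ v : PV, (∃ B ∈ Big, v ∈ B) ∨
      (∃ B ∈ Big, v ∉ B ∧ Dominates petersenK (insert v B)) := by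
    intro v
    obtain ⟨X, hX, hvX⟩ := π.exists_mem (Finset.mem_univ v)
    by_cases hXb : 2 ≤ X.card
    · exact Or.inl ⟨X, Finset.mem_filter.mpr ⟨hX, hXb⟩, hvX⟩
    · have hc1 : X.card = 1 := by have := (hne X hX).card_pos; omega
      have hXv : X = {v} := by
        obtain ⟨a, ha⟩ := Finset.card_eq_one.mp hc1
        rw [ha] at hvX ⊢
        rw [Finset.mem_singleton] at hvX
        rw [hvX]
      obtain ⟨-, Y, hY, hYX, hYnd, hYdom⟩ := hco X hX
      have hvY : v ∉ Y := by
        have hd := hdisj X hX Y hY (fun he => hYX he.symm)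
        exact Finset.disjoint_left.mp hd (hXv ▸ Finset.mem_singleton_self v)
      have hU : X ∪ Y = insert v Y := by rw [hXv, Finset.insert_eq]
      have hY2 : 2 ≤ Y.card := by
        by_contra hY2'
        have hYc1 : Y.card = 1 := by have := (hne Y hY).card_pos; omega
        have hc2 : (X ∪ Y).card = 2 := by
          rw [hU, Finset.card_insert_of_notMem hvY, hYc1]
        exact noDom2 hc2 hYdom
      exact Or.inr ⟨Y, Finset.mem_filter.mpr ⟨hY, hY2⟩, hvY, hU ▸ hYdom⟩
  have cover_list : ∀ L : List (Finset PV), (∀ B ∈ Big, B ∈ L) →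
      ∀ v : PV, (∃ B ∈ L, v ∈ B) ∨
        (∃ B ∈ L, v ∉ B ∧ Dominates petersenK (insert v B)) := by
    intro L hL v
    rcases cover v with ⟨B, hB, hv⟩ | ⟨B, hB, hv, hd⟩
    · exact Or.inl ⟨B, hL B hB, hv⟩
    · exact Or.inr ⟨B, hL B hB, hv, hd⟩
  -- size accounting
  have hsplit : ∑ X ∈ Big, X.card +
      ∑ X ∈ π.parts.filter (fun X => ¬ 2 ≤ X.card), X.card = 10 := by
    rw [hBig, Finset.sum_filter_add_sum_filter_not, hsum]
  have hones : ∑ X ∈ π.parts.filter (fun X => ¬ 2 ≤ X.card), X.card =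
      (π.parts.filter (fun X => ¬ 2 ≤ X.card)).card := by
    rw [Finset.sum_congr rfl (fun X hX => ?_), Finset.sum_const, smul_eq_mul, mul_one]
    obtain ⟨hXp, hX2⟩ := Finset.mem_filter.mp hX
    have := (hne X hXp).card_pos
    omega
  have hfc : Big.card + (π.parts.filter (fun X => ¬ 2 ≤ X.card)).card = π.parts.card := by
    rw [hBig]
    simpa using Finset.card_filter_add_card_filter_not
      (s := π.parts) (p := fun X => 2 ≤ X.card)
  have h2le : 2 * Big.card ≤ ∑ X ∈ Big, X.card := by
    have := Finset.card_nsmul_le_sum Big (fun X => X.card) 2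
      (fun X hX => (hBigMem X hX).2)
    simpa [smul_eq_mul, mul_comm] using this
  have hsB : ∑ X ∈ Big, X.card ≤ 3 + Big.card := by omega
  have hbc3 : Big.card ≤ 3 := by omega
  
  have hmask2 : ∀ B ∈ Big, B.card = 2 → maskV B ∈ cand 2 := fun B hB hc =>
    candMem (maskM2 hc) ((hco B (hBigMem B hB).1).1)
  have hmask3 : ∀ B ∈ Big, B.card = 3 → maskV B ∈ cand 3 := fun B hB hc =>
    candMem (maskM3 hc) ((hco B (hBigMem B hB).1).1)
  have hbc : Big.card = 0 ∨ Big.card = 1 ∨ Big.card = 2 ∨ Big.card = 3 := by omega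
  rcases hbc with hbc | hbc | hbc | hbc
  · have hBigE : Big = ∅ := Finset.card_eq_zero.mp hbc
    rcases cover ⟨{0,1}, rfl⟩ with ⟨B, hB, -⟩ | ⟨B, hB, -⟩ <;> rw [hBigE] at hB <;>
      exact absurd hB (Finset.notMem_empty B)
  · obtain ⟨B1, hB1⟩ := Finset.card_eq_one.mp hbc
    have hB1m : B1 ∈ Big := by rw [hB1]; exact Finset.mem_singleton_self B1
    have hnd : ¬ Dominates petersenK B1 := (hco B1 (hBigMem B1 hB1m).1).1
    have hs : ∑ X ∈ Big, X.card = B1.card := by rw [hB1, Finset.sum_singleton]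
    have hc24 : B1.card = 2 ∨ B1.card = 3 ∨ B1.card = 4 := by
      have := (hBigMem B1 hB1m).2; omega
    have hcovL : covAll [maskV B1] = true := by
      simpa using covAll_build [B1] (cover_list [B1] (fun B hB => by
        rw [hB1] at hB; simp [Finset.mem_singleton.mp hB]))
    rcases hc24 with hc | hc | hc
    · exact LM1 _ (List.mem_append.mpr (Or.inl (hmask2 B1 hB1m hc))) hcovL
    · exact LM1 _ (List.mem_append.mpr (Or.inr (hmask3 B1 hB1m hc))) hcovL
    · obtain ⟨a, t, hat, hins, htc⟩ := Finset.card_eq_succ.mp (show B1.card = 3 + 1 by omega)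
      have hndt : ¬ Dominates petersenK t := fun hd =>
        hnd (dom_mono (by rw [← hins]; exact Finset.subset_insert a t) hd)
      have heq : w a ||| maskV t = maskV B1 := by rw [← hins, mask_insert hat]
      refine LM1Q (maskV t) (candMem (maskM3 htc) hndt) (w a) (w_mem_vMasks a)
        (land_zero_of_notMem hat) ?_ ?_
      · rw [heq]; exact domB_false_of_not_dom hnd
      · rw [heq]; exact hcovL
  · obtain ⟨B1, B2, h12, hB2eq⟩ := Finset.card_eq_two.mp hbc
    have hB1m : B1 ∈ Big := by rw [hB2eq]; simp
    have hB2m : B2 ∈ Big := by rw [hB2eq]; simp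
    have hl12 : maskV B1 &&& maskV B2 = 0 :=
      disj_mask (hdisj B1 (hBigMem B1 hB1m).1 B2 (hBigMem B2 hB2m).1 h12)
    have hs : B1.card + B2.card = ∑ X ∈ Big, X.card := by
      rw [hB2eq, Finset.sum_pair h12]
    have h1ge := (hBigMem B1 hB1m).2
    have h2ge := (hBigMem B2 hB2m).2
    have hsub : ∀ B ∈ Big, B ∈ [B1, B2] := fun B hB => by
      rw [hB2eq] at hB
      rcases Finset.mem_insert.mp hB with rfl | hB
      · simp
      · simp [Finset.mem_singleton.mp hB]
    have hcovL : covAll [maskV B1, maskV B2] = true := by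
      simpa using covAll_build [B1, B2] (cover_list _ hsub)
    have hcovL' : covAll [maskV B2, maskV B1] = true := by
      simpa using covAll_build [B2, B1] (cover_list _ (fun B hB => by
        have := hsub B hB; simp at this ⊢; tauto))
    have hcases : (B1.card = 2 ∧ B2.card = 2) ∨ (B1.card = 2 ∧ B2.card = 3) ∨
        (B1.card = 3 ∧ B2.card = 2) := by omega
    rcases hcases with ⟨hc1, hc2⟩ | ⟨hc1, hc2⟩ | ⟨hc1, hc2⟩
    · exact LM22 _ (hmask2 B1 hB1m hc1) _ (hmask2 B2 hB2m hc2) hl12 hcovL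
    · exact LM23 _ (hmask2 B1 hB1m hc1) _ (hmask3 B2 hB2m hc2) hl12 hcovL
    · exact LM23 _ (hmask2 B2 hB2m hc2) _ (hmask3 B1 hB1m hc1)
        (by rw [Nat.and_comm]; exact hl12) hcovL'
  · obtain ⟨B1, B2, B3, h12, h13, h23, hBeq⟩ := Finset.card_eq_three.mp hbc
    have hB1m : B1 ∈ Big := by rw [hBeq]; simp
    have hB2m : B2 ∈ Big := by rw [hBeq]; simp
    have hB3m : B3 ∈ Big := by rw [hBeq]; simp
    have hs : B1.card + B2.card + B3.card = ∑ X ∈ Big, X.card := by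
      rw [hBeq, Finset.sum_insert (by simp [h12, h13]), Finset.sum_pair h23, add_assoc]
    have h1ge := (hBigMem B1 hB1m).2
    have h2ge := (hBigMem B2 hB2m).2
    have h3ge := (hBigMem B3 hB3m).2
    have hc1 : B1.card = 2 := by omega
    have hc2 : B2.card = 2 := by omega
    have hc3 : B3.card = 2 := by omega
    have hsub : ∀ B ∈ Big, B ∈ [B1, B2, B3] := fun B hB => by
      rw [hBeq] at hB
      simp only [Finset.mem_insert, Finset.mem_singleton] at hB
      simp only [List.mem_cons, List.mem_singleton, List.not_mem_nil]
      tauto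
    have hm1 := hmask2 B1 hB1m hc1
    have hm2 := hmask2 B2 hB2m hc2
    have hm3 := hmask2 B3 hB3m hc3
    have hl12 : maskV B1 &&& maskV B2 = 0 :=
      disj_mask (hdisj B1 (hBigMem B1 hB1m).1 B2 (hBigMem B2 hB2m).1 h12)
    have hl13 : maskV B1 &&& maskV B3 = 0 :=
      disj_mask (hdisj B1 (hBigMem B1 hB1m).1 B3 (hBigMem B3 hB3m).1 h13)
    have hl23 : maskV B2 &&& maskV B3 = 0 :=
      disj_mask (hdisj B2 (hBigMem B2 hB2m).1 B3 (hBigMem B3 hB3m).1 h23)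
    have hne12 : maskV B1 ≠ maskV B2 := fun he => by
      rw [← he, Nat.and_self] at hl12
      exact mask_ne_zero (hne B1 (hBigMem B1 hB1m).1) hl12
    have hne13 : maskV B1 ≠ maskV B3 := fun he => by
      rw [← he, Nat.and_self] at hl13
      exact mask_ne_zero (hne B1 (hBigMem B1 hB1m).1) hl13
    have hne23 : maskV B2 ≠ maskV B3 := fun he => by
      rw [← he, Nat.and_self] at hl23
      exact mask_ne_zero (hne B2 (hBigMem B2 hB2m).1) hl23
    have final : ∀ X Y Z : Finset PV,
        maskV X ∈ cand 2 → maskV Y ∈ cand 2 → maskV Z ∈ cand 2 →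
        maskV X < maskV Y → maskV Y < maskV Z →
        maskV X &&& maskV Y = 0 → maskV X &&& maskV Z = 0 → maskV Y &&& maskV Z = 0 →
        (∀ B ∈ Big, B ∈ [X, Y, Z]) → False := by
      intro X Y Z hcX hcY hcZ hxy hyz hlXY hlXZ hlYZ hsubL
      have hcov : covAll [maskV X, maskV Y, maskV Z] = true := by
        simpa using covAll_build [X, Y, Z] (cover_list _ hsubL)
      exact LM222 _ hcX _ hcY hxy hlXY _ hcZ hyz hlXZ hlYZ hcov
    have perm : ∀ (X Y Z : Finset PV), (∀ B, B ∈ [B1,B2,B3] → B ∈ [X,Y,Z]) →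
        ∀ B ∈ Big, B ∈ [X, Y, Z] := fun X Y Z hp B hB => hp B (hsub B hB)
    rcases Nat.lt_trichotomy (maskV B1) (maskV B2) with o12 | o12 | o12
    · rcases Nat.lt_trichotomy (maskV B2) (maskV B3) with o23 | o23 | o23
      · exact final B1 B2 B3 hm1 hm2 hm3 o12 o23 hl12 hl13 hl23
          (perm _ _ _ (by intro B hB; simpa using hB))
      · exact absurd o23 hne23
      · rcases Nat.lt_trichotomy (maskV B1) (maskV B3) with o13 | o13 | o13
        · exact final B1 B3 B2 hm1 hm3 hm2 o13 o23 hl13 hl12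
            (by rw [Nat.and_comm]; exact hl23) (perm _ _ _ (by intro B hB; simp at hB ⊢; tauto))
        · exact absurd o13 hne13
        · exact final B3 B1 B2 hm3 hm1 hm2 o13 o12
            (by rw [Nat.and_comm]; exact hl13) (by rw [Nat.and_comm]; exact hl23) hl12
            (perm _ _ _ (by intro B hB; simp at hB ⊢; tauto))
    · exact absurd o12 hne12
    · rcases Nat.lt_trichotomy (maskV B1) (maskV B3) with o13 | o13 | o13
      · exact final B2 B1 B3 hm2 hm1 hm3 o12 o13
          (by rw [Nat.and_comm]; exact hl12) hl23 hl13
          (perm _ _ _ (by intro B hB; simp at hB ⊢; tauto))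
      · exact absurd o13 hne13
      · rcases Nat.lt_trichotomy (maskV B2) (maskV B3) with o23 | o23 | o23
        · exact final B2 B3 B1 hm2 hm3 hm1 o23 o13 hl23
            (by rw [Nat.and_comm]; exact hl12) (by rw [Nat.and_comm]; exact hl13)
            (perm _ _ _ (by intro B hB; simp at hB ⊢; tauto))
        · exact absurd o23 hne23
        · exact final B3 B2 B1 hm3 hm2 hm1 o23 o12
            (by rw [Nat.and_comm]; exact hl23) (by rw [Nat.and_comm]; exact hl13)
            (by rw [Nat.and_comm]; exact hl12)
            (perm _ _ _ (by intro B hB; simp at hB ⊢; tauto))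


theorem stmt10 : coalitionNumber {s : Finset (Fin 5) // s.card = 2} petersenK ≤ 6 ∧
    ¬ ∃ π : Finpartition (univ : Finset {s : Finset (Fin 5) // s.card = 2}),
      IsCoalitionPartition petersenK π ∧ 7 ≤ π.parts.card := by
  constructor
  · apply csSup_le'
    rintro k ⟨π, hπ, rfl⟩
    exact parts_le π hπ
  · rintro ⟨π, hπ, h7⟩
    have := parts_le π hπ
    omega
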